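/- Let N = N₁ × ⋯ × N_k be a finite group such that each direct factor N_i is a characteristic subgroup of N. If Gaschütz' theorem holds for each N_i, then Gaschütz' theorem holds for N. -/

import Mathlib

open Pointwise

/-- `K` is a complement of `N` inside the subgroup `H` of `G`:
`K ≤ H`, `K ∩ N = 1` and `KN = H` (as sets). -/
def IsComplementOfIn {G : Type*} [Group G] (K N H : Subgroup G) : Prop :=
  K ≤ H ∧ K ⊓ N = ⊥ ∧ (K : Set G) * (N : Set G) = (H : Set G)

/-- `N` has a complement in the subgroup `H` of `G`. -/
def HasComplementIn {G : Type*} [Group G] (N H : Subgroup G) : Prop :=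
  ∃ K : Subgroup G, IsComplementOfIn K N H

universe u

/-- Gaschütz' theorem holds for the finite group `N`: whenever `N` is embedded as a
normal subgroup of a finite group `G`, `H` is a subgroup with `N ≤ H ≤ G`,
`gcd(|N|, [G : H]) = 1` and `N` has a complement in `H`, then `N` has a complement
in `G`. -/
def GaschuetzHolds (N : Type u) [Group N] : Prop :=
  ∀ (G : Type u) [Group G] [Finite G] (f : N →* G) (H : Subgroup G),
    Function.Injective f → f.range.Normal → f.range ≤ H →
    Nat.Coprime (Nat.card N) H.index →
    HasComplementIn f.range H → HasComplementIn f.range ⊤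

lemma gaschuetz_of_mulEquiv {N M : Type u} [Group N] [Group M] (e : N ≃* M)
    (h : GaschuetzHolds N) : GaschuetzHolds M := by
  intro G _ _ f H hinj hnorm hle hcop hcomp
  have hr : (f.comp e.toMonoidHom).range = f.range := by
    ext x
    constructor
    · rintro ⟨y, rfl⟩; exact ⟨e y, rfl⟩
    · rintro ⟨y, rfl⟩; exact ⟨e.symm y, by simp⟩
  have hcard : Nat.card N = Nat.card M := Nat.card_congr e.toEquiv
  have := h G (f.comp e.toMonoidHom) H (hinj.comp e.injective)
    (by rwa [hr]) (by rwa [hr]) (by rwa [hcard]) (by rwa [hr])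
  rwa [hr] at this

lemma char_map_equiv {N M : Type*} [Group N] [Group M] (e : N ≃* M)
    {S : Subgroup N} (h : S.Characteristic) :
    (S.map e.toMonoidHom).Characteristic := by
  rw [Subgroup.characteristic_iff_le_comap]
  rintro φ x ⟨s, hs, rfl⟩
  have hψ := Subgroup.characteristic_iff_le_comap.mp h (e.trans (φ.trans e.symm))
  have h1 : e.symm (φ (e s)) ∈ S := by
    have := hψ hs
    rw [Subgroup.mem_comap] at this
    simpa using this
  exact Subgroup.mem_comap.mpr ⟨e.symm (φ (e s)), h1, e.apply_symm_apply _⟩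

lemma normal_of_char_subgroupOf {G : Type*} [Group G] {K H : Subgroup G}
    (hKH : K ≤ H) [hn : H.Normal] (hc : (K.subgroupOf H).Characteristic) :
    K.Normal := by
  constructor
  intro n hnK g
  have h1 : (⟨n, hKH hnK⟩ : H) ∈ K.subgroupOf H := by
    simpa [Subgroup.mem_subgroupOf] using hnK
  have h2 := Subgroup.characteristic_iff_le_comap.mp hc (MulAut.conjNormal g) h1
  rw [Subgroup.mem_comap, Subgroup.mem_subgroupOf] at h2
  simpa [MulAut.conjNormal_apply] using h2

lemma index_subgroupOf_of_mul_univ {G : Type*} [Group G] {H L : Subgroup G}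
    (h : ∀ g : G, ∃ l ∈ L, ∃ n ∈ H, g = l * n) :
    (H.subgroupOf L).index = H.index := by
  let φ : L ⧸ H.subgroupOf L → G ⧸ H :=
    Quotient.map' (fun l : L => (l : G)) (by
      intro a b hab
      rw [QuotientGroup.leftRel_apply] at hab ⊢
      simpa [Subgroup.mem_subgroupOf] using hab)
  have hφbij : Function.Bijective φ := by
    constructor
    · intro a b
      refine Quotient.inductionOn₂' a b fun a b hab => ?_
      have : ((a : G))⁻¹ * b ∈ H := by
        have := Quotient.eq''.mp hab
        rwa [QuotientGroup.leftRel_apply] at this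
      exact Quotient.sound' (QuotientGroup.leftRel_apply.mpr
        (by simpa [Subgroup.mem_subgroupOf] using this))
    · intro q
      refine Quotient.inductionOn' q fun g => ?_
      obtain ⟨l, hl, n, hn, rfl⟩ := h g
      refine ⟨Quotient.mk'' ⟨l, hl⟩, Quotient.sound' ?_⟩
      rw [QuotientGroup.leftRel_apply]
      simpa using hn
  rw [Subgroup.index, Subgroup.index]
  exact Nat.card_eq_of_bijective φ hφbij

lemma gaschuetz_prod (A B : Type u) [Group A] [Group B] [Finite A] [Finite B]
    (hAchar : ((MonoidHom.inl A B).range).Characteristic)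
    (hBchar : ((MonoidHom.inr A B).range).Characteristic)
    (hA : GaschuetzHolds A) (hB : GaschuetzHolds B) :
    GaschuetzHolds (A × B) := by
  intro G _ _ f H hinj hnorm hle hcop hcomp
  obtain ⟨K, hKH, hKN, hKmul⟩ := hcomp
  set N := f.range with hN
  set NA := Subgroup.map f (MonoidHom.inl A B).range with hNA
  set NB := Subgroup.map f (MonoidHom.inr A B).range with hNB
  have memNA : ∀ x : G, x ∈ NA ↔ ∃ a : A, f (a, 1) = x := by
    intro x
    rw [hNA, Subgroup.mem_map]
    constructor
    · rintro ⟨y, ⟨a, rfl⟩, rfl⟩; exact ⟨a, rfl⟩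
    · rintro ⟨a, rfl⟩; exact ⟨(a, 1), ⟨a, rfl⟩, rfl⟩
  have memNB : ∀ x : G, x ∈ NB ↔ ∃ b : B, f (1, b) = x := by
    intro x
    rw [hNB, Subgroup.mem_map]
    constructor
    · rintro ⟨y, ⟨b, rfl⟩, rfl⟩; exact ⟨b, rfl⟩
    · rintro ⟨b, rfl⟩; exact ⟨(1, b), ⟨b, rfl⟩, rfl⟩
  have hNAle : NA ≤ N := by
    intro x hx
    obtain ⟨a, rfl⟩ := (memNA x).mp hx
    exact ⟨(a, 1), rfl⟩
  have hNBle : NB ≤ N := by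
    intro x hx
    obtain ⟨b, rfl⟩ := (memNB x).mp hx
    exact ⟨(1, b), rfl⟩
  have hsplit : ∀ (a : A) (b : B), f (a, b) = f (a, 1) * f (1, b) := by
    intro a b
    rw [← map_mul]
    congr 1
    simp [Prod.mk_mul_mk]
  have hKNtriv : ∀ x : G, x ∈ K → x ∈ N → x = 1 := by
    intro x hx hn
    have : x ∈ K ⊓ N := ⟨hx, hn⟩
    rw [hKN] at this
    simpa using this
  have memH : ∀ x : G, x ∈ H → ∃ k ∈ K, ∃ p : A × B, k * f p = x := by
    intro x hx
    have hx' : x ∈ (↑K * ↑N : Set G) := by rw [hKmul]; exact hx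
    obtain ⟨k, hk, n, hn, rfl⟩ := hx'
    have hn' : n ∈ N := hn
    obtain ⟨p, rfl⟩ := hn'
    exact ⟨k, hk, p, rfl⟩
  have hABtriv : ∀ x : G, x ∈ NA → x ∈ NB → x = 1 := by
    intro x h1 h2
    obtain ⟨a, rfl⟩ := (memNA x).mp h1
    obtain ⟨b, hb⟩ := (memNB _).mp h2
    have hab : ((1 : A), b) = (a, (1 : B)) := hinj hb
    rw [Prod.mk.injEq] at hab
    rw [← hab.1]
    exact map_one f
  -- normality of NA and NB
  haveI hNnormal : N.Normal := hnorm
  have hNAchar : (NA.subgroupOf N).Characteristic := by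
    have heq : NA.subgroupOf N = Subgroup.map (MonoidHom.ofInjective hinj).toMonoidHom
        (MonoidHom.inl A B).range := by
      ext x
      rw [Subgroup.mem_subgroupOf, memNA, Subgroup.mem_map]
      constructor
      · rintro ⟨a, ha⟩
        exact ⟨(a, 1), ⟨a, rfl⟩, Subtype.ext (by simpa [MonoidHom.ofInjective_apply] using ha)⟩
      · rintro ⟨y, ⟨a, rfl⟩, rfl⟩
        exact ⟨a, by simp [MonoidHom.ofInjective_apply]⟩
    rw [heq]
    exact char_map_equiv _ hAchar
  have hNBchar : (NB.subgroupOf N).Characteristic := by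
    have heq : NB.subgroupOf N = Subgroup.map (MonoidHom.ofInjective hinj).toMonoidHom
        (MonoidHom.inr A B).range := by
      ext x
      rw [Subgroup.mem_subgroupOf, memNB, Subgroup.mem_map]
      constructor
      · rintro ⟨b, hb⟩
        exact ⟨(1, b), ⟨b, rfl⟩, Subtype.ext (by simpa [MonoidHom.ofInjective_apply] using hb)⟩
      · rintro ⟨y, ⟨b, rfl⟩, rfl⟩
        exact ⟨b, by simp [MonoidHom.ofInjective_apply]⟩
    rw [heq]
    exact char_map_equiv _ hBchar
  haveI hNAnormal : NA.Normal := normal_of_char_subgroupOf hNAle hNAchar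
  haveI hNBnormal : NB.Normal := normal_of_char_subgroupOf hNBle hNBchar
  -- quotient stage
  set π := QuotientGroup.mk' NB with hπ
  have hπsurj : Function.Surjective π := QuotientGroup.mk'_surjective NB
  have hπker : π.ker = NB := QuotientGroup.ker_mk' NB
  set fA : A →* G ⧸ NB := π.comp (f.comp (MonoidHom.inl A B)) with hfAdef
  have hfA : ∀ a, fA a = π (f (a, 1)) := fun a => rfl
  have hπNB : ∀ x : G, x ∈ NB → π x = 1 := by
    intro x hx
    rw [← MonoidHom.mem_ker, hπker]
    exact hx
  have hfAinj : Function.Injective fA := by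
    rw [← MonoidHom.ker_eq_bot_iff, Subgroup.eq_bot_iff_forall]
    intro a ha
    rw [MonoidHom.mem_ker, hfA] at ha
    have ha' : f (a, 1) ∈ NB := by rw [← hπker]; exact MonoidHom.mem_ker.mpr ha
    obtain ⟨b, hb⟩ := (memNB _).mp ha'
    have := hinj hb
    rw [Prod.mk.injEq] at this
    exact this.1.symm
  have hrangeA : fA.range = Subgroup.map π N := by
    apply le_antisymm
    · rintro x ⟨a, rfl⟩
      exact Subgroup.mem_map.mpr ⟨f (a, 1), ⟨(a, 1), rfl⟩, rfl⟩
    · intro x hx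
      obtain ⟨n, hn, rfl⟩ := Subgroup.mem_map.mp hx
      have hn' : n ∈ N := hn
      obtain ⟨⟨a, b⟩, rfl⟩ := hn'
      refine ⟨a, ?_⟩
      rw [hfA, hsplit a b, map_mul, hπNB _ ((memNB _).mpr ⟨b, rfl⟩), mul_one]
  haveI : (Subgroup.map π N).Normal := Subgroup.Normal.map hnorm π hπsurj
  haveI hrangeAn : fA.range.Normal := by rw [hrangeA]; infer_instance
  set Hbar := Subgroup.map π H with hHbar
  have hleA : fA.range ≤ Hbar := by rw [hrangeA]; exact Subgroup.map_mono hle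
  have hHbarindex : Hbar.index = H.index :=
    Subgroup.index_map_eq H hπsurj (by rw [hπker]; exact hNBle.trans hle)
  have hcopA : Nat.Coprime (Nat.card A) Hbar.index := by
    rw [hHbarindex]
    exact Nat.Coprime.coprime_dvd_left (by rw [Nat.card_prod]; exact dvd_mul_right _ _) hcop
  have hcompA : HasComplementIn fA.range Hbar := by
    refine ⟨Subgroup.map π K, Subgroup.map_mono hKH, ?_, ?_⟩
    · rw [Subgroup.eq_bot_iff_forall]
      intro x hx
      rw [Subgroup.mem_inf] at hx
      obtain ⟨hx1, hx2⟩ := hx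
      obtain ⟨k, hk, rfl⟩ := Subgroup.mem_map.mp hx1
      obtain ⟨a, ha⟩ := hx2
      rw [hfA, hπ, QuotientGroup.mk'_eq_mk'] at ha
      obtain ⟨z, hz, hzk⟩ := ha
      have hkN : k ∈ N := by
        rw [← hzk]
        exact mul_mem (hNAle ((memNA _).mpr ⟨a, rfl⟩)) (hNBle hz)
      rw [hKNtriv k hk hkN, map_one]
    · ext x
      constructor
      · rintro ⟨k', hk', n', hn', rfl⟩
        have hk'' : k' ∈ Subgroup.map π K := hk'
        obtain ⟨k, hk, rfl⟩ := Subgroup.mem_map.mp hk''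
        have hn'' : n' ∈ fA.range := hn'
        obtain ⟨a, rfl⟩ := hn''
        have hmem : k * f (a, 1) ∈ H := mul_mem (hKH hk) (hle (hNAle ((memNA _).mpr ⟨a, rfl⟩)))
        exact Subgroup.mem_map.mpr ⟨k * f (a, 1), hmem, by rw [map_mul]; rfl⟩
      · intro hx
        obtain ⟨h, hh, rfl⟩ := Subgroup.mem_map.mp hx
        obtain ⟨k, hk, ⟨a, b⟩, rfl⟩ := memH h hh
        have hcalc : π (k * f (a, b)) = π k * fA a := by
          rw [map_mul, hsplit, map_mul, hπNB _ ((memNB _).mpr ⟨b, rfl⟩), mul_one]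
          rfl
        rw [hcalc]
        exact Set.mul_mem_mul (Subgroup.mem_map.mpr ⟨k, hk, rfl⟩) ⟨a, rfl⟩
  obtain ⟨L', -, hL'inf, hL'mul⟩ := hA (G ⧸ NB) fA Hbar hfAinj hrangeAn hleA hcopA hcompA
  set L := Subgroup.comap π L' with hL
  have hNBL : NB ≤ L := by
    intro x hx
    show π x ∈ L'
    rw [hπNB _ hx]
    exact one_mem L'
  have hLinfN : ∀ x : G, x ∈ L → x ∈ N → x ∈ NB := by
    intro x hxL hxN
    have h1 : π x ∈ L' ⊓ fA.range :=
      ⟨hxL, by rw [hrangeA]; exact Subgroup.mem_map.mpr ⟨x, hxN, rfl⟩⟩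
    rw [hL'inf] at h1
    have h2 : π x = 1 := by simpa using h1
    rw [← hπker]
    exact MonoidHom.mem_ker.mpr h2
  have hLNmul : ∀ g : G, ∃ l ∈ L, ∃ n ∈ N, g = l * n := by
    intro g
    have hg : π g ∈ (↑L' * ↑fA.range : Set (G ⧸ NB)) := by
      rw [hL'mul]; trivial
    obtain ⟨l', hl', n', hn', heq⟩ := hg
    have hn'' : n' ∈ fA.range := hn'
    obtain ⟨a, rfl⟩ := hn''
    obtain ⟨l, rfl⟩ := hπsurj l'
    have : π (l * f (a, 1)) = π g := by rw [map_mul]; exact heq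
    rw [hπ, QuotientGroup.mk'_eq_mk'] at this
    obtain ⟨z, hz, hzg⟩ := this
    refine ⟨l, hl', f (a, 1) * z, mul_mem (hNAle ((memNA _).mpr ⟨a, rfl⟩)) (hNBle hz), ?_⟩
    rw [← hzg, mul_assoc]
  -- second stage inside L
  set f2 : B →* L := (f.comp (MonoidHom.inr A B)).codRestrict L
    (fun b => hNBL ((memNB _).mpr ⟨b, rfl⟩)) with hf2def
  have hf2 : ∀ b, (f2 b : G) = f (1, b) := fun b => rfl
  have hf2inj : Function.Injective f2 := by
    intro b1 b2 hb
    have h1 : f (1, b1) = f (1, b2) := by rw [← hf2, ← hf2, hb]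
    have := hinj h1
    rw [Prod.mk.injEq] at this
    exact this.2
  have hrange2 : f2.range = NB.subgroupOf L := by
    ext x
    constructor
    · rintro ⟨b, rfl⟩
      exact Subgroup.mem_subgroupOf.mpr ((memNB _).mpr ⟨b, rfl⟩)
    · intro hx
      obtain ⟨b, hb⟩ := (memNB _).mp (Subgroup.mem_subgroupOf.mp hx)
      exact ⟨b, Subtype.ext hb⟩
  haveI : f2.range.Normal := by rw [hrange2]; infer_instance
  set H2 := H.subgroupOf L with hH2
  have hle2 : f2.range ≤ H2 := by
    rw [hrange2]
    intro x hx
    exact Subgroup.mem_subgroupOf.mpr (hle (hNBle (Subgroup.mem_subgroupOf.mp hx)))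
  have hindex2 : H2.index = H.index := index_subgroupOf_of_mul_univ (fun g => by
    obtain ⟨l, hl, n, hn, hg⟩ := hLNmul g
    exact ⟨l, hl, n, hle hn, hg⟩)
  have hcop2 : Nat.Coprime (Nat.card B) H2.index := by
    rw [hindex2]
    exact Nat.Coprime.coprime_dvd_left (by rw [Nat.card_prod]; exact dvd_mul_left _ _) hcop
  have hcomp2 : HasComplementIn f2.range H2 := by
    refine ⟨((K ⊔ NA) ⊓ H).subgroupOf L, ?_, ?_, ?_⟩
    · intro x hx
      exact Subgroup.mem_subgroupOf.mpr (Subgroup.mem_subgroupOf.mp hx).2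
    · rw [Subgroup.eq_bot_iff_forall]
      intro x hx
      rw [Subgroup.mem_inf] at hx
      obtain ⟨hx1, hx2⟩ := hx
      have hx1' := Subgroup.mem_subgroupOf.mp hx1
      have hxNB : (x : G) ∈ NB := Subgroup.mem_subgroupOf.mp (by rw [← hrange2]; exact hx2)
      have hsup : (x : G) ∈ (↑K * ↑NA : Set G) := by
        rw [← Subgroup.mul_normal K NA]
        exact hx1'.1
      obtain ⟨kk, hkk, na, hna, hxe⟩ := hsup
      have hna' : na ∈ NA := hna
      obtain ⟨a, rfl⟩ := (memNA na).mp hna'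
      obtain ⟨b, hb⟩ := (memNB _).mp hxNB
      have hkkN : kk ∈ N := by
        have hkkeq : kk = f (1, b) * (f (a, 1))⁻¹ := by
          rw [hb, ← hxe]; simp
        rw [hkkeq]
        exact mul_mem ⟨(1, b), rfl⟩ (inv_mem ⟨(a, 1), rfl⟩)
      have hkk1 : kk = 1 := hKNtriv kk (hkk : kk ∈ K) hkkN
      have hx1 : (x : G) = 1 := hABtriv _
        (by rw [← hxe, hkk1]; simpa using (memNA _).mpr ⟨a, rfl⟩) hxNB
      exact Subtype.ext hx1
    · ext x
      constructor
      · rintro ⟨c, hc, m, hm, rfl⟩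
        have hc' : c ∈ ((K ⊔ NA) ⊓ H).subgroupOf L := hc
        have hm' : m ∈ f2.range := hm
        have hcH : (c : G) ∈ H := (Subgroup.mem_subgroupOf.mp hc').2
        have hmH : (m : G) ∈ H :=
          hle (hNBle (Subgroup.mem_subgroupOf.mp (by rw [← hrange2]; exact hm')))
        exact Subgroup.mem_subgroupOf.mpr (mul_mem hcH hmH)
      · intro hx
        have hxH : (x : G) ∈ H := Subgroup.mem_subgroupOf.mp hx
        obtain ⟨k, hk, ⟨a, b⟩, hkf⟩ := memH _ hxH
        have hfb : f (1, b) ∈ NB := (memNB _).mpr ⟨b, rfl⟩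
        have hceq : k * f (a, 1) = (x : G) * (f (1, b))⁻¹ := by
          rw [← hkf, hsplit a b]; group
        have hcL : k * f (a, 1) ∈ L := by
          rw [hceq]
          exact mul_mem x.2 (inv_mem (hNBL hfb))
        refine ⟨⟨k * f (a, 1), hcL⟩, ?_, f2 b, ⟨b, rfl⟩, ?_⟩
        · refine Subgroup.mem_subgroupOf.mpr ⟨?_, ?_⟩
          · exact mul_mem (le_sup_left (α := Subgroup G) hk)
              (le_sup_right (α := Subgroup G) ((memNA _).mpr ⟨a, rfl⟩))
          · show k * f (a, 1) ∈ H
            rw [hceq]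
            exact mul_mem hxH (inv_mem (hle (hNBle hfb)))
        · apply Subtype.ext
          show k * f (a, 1) * f (1, b) = (x : G)
          rw [mul_assoc, ← hsplit, hkf]
  obtain ⟨D', -, hDinf, hDmul⟩ := hB L f2 H2 hf2inj ‹f2.range.Normal› hle2 hcop2 hcomp2
  refine ⟨Subgroup.map L.subtype D', le_top, ?_, ?_⟩
  · rw [Subgroup.eq_bot_iff_forall]
    intro x hx
    rw [Subgroup.mem_inf] at hx
    obtain ⟨hx1, hx2⟩ := hx
    obtain ⟨d, hd, rfl⟩ := Subgroup.mem_map.mp hx1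
    have hdNB : (d : G) ∈ NB := hLinfN _ d.2 hx2
    have hdmem : d ∈ f2.range := by
      rw [hrange2]
      exact Subgroup.mem_subgroupOf.mpr hdNB
    have hd1 : d ∈ D' ⊓ f2.range := ⟨hd, hdmem⟩
    rw [hDinf] at hd1
    have : d = 1 := by simpa using hd1
    simp [this]
  · ext x
    simp only [Subgroup.coe_top, Set.mem_univ, iff_true]
    obtain ⟨l, hl, n, hn, rfl⟩ := hLNmul x
    have hlmem : (⟨l, hl⟩ : L) ∈ (↑D' * ↑f2.range : Set L) := by
      rw [hDmul]; trivial
    obtain ⟨d, hd, m, hm, hdm⟩ := hlmem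
    have hm' : m ∈ f2.range := hm
    have hmNB : (m : G) ∈ NB := Subgroup.mem_subgroupOf.mp (by rw [← hrange2]; exact hm')
    refine ⟨(d : G), Subgroup.mem_map.mpr ⟨d, hd, rfl⟩, (m : G) * n, mul_mem (hNBle hmNB) hn, ?_⟩
    have hdl : (d : G) * m = l := congrArg Subtype.val hdm
    show (d : G) * ((m : G) * n) = l * n
    rw [← mul_assoc, hdl]

def piSuccMulEquiv {k : ℕ} (N : Fin (k + 1) → Type u) [∀ i, Group (N i)] :
    (∀ i, N i) ≃* N 0 × ∀ j : Fin k, N j.succ where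
  toFun x := (x 0, fun j => x j.succ)
  invFun p := Fin.cons p.1 p.2
  left_inv x := Fin.cons_self_tail x
  right_inv p := by
    cases p with
    | mk a t => simp [Fin.cons_zero, Fin.cons_succ]
  map_mul' x y := rfl

lemma piSuccMulEquiv_apply {k : ℕ} (N : Fin (k + 1) → Type u) [∀ i, Group (N i)]
    (x : ∀ i, N i) : piSuccMulEquiv N x = (x 0, fun j : Fin k => x j.succ) := rfl

lemma piSuccMulEquiv_symm_apply {k : ℕ} (N : Fin (k + 1) → Type u) [∀ i, Group (N i)]
    (p : N 0 × ∀ j : Fin k, N j.succ) : (piSuccMulEquiv N).symm p = Fin.cons p.1 p.2 := rfl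

lemma tail_mulSingle {k : ℕ} (N : Fin (k + 1) → Type u) [∀ i, Group (N i)]
    (j : Fin k) (a : N j.succ) :
    (fun i : Fin k => Pi.mulSingle j.succ a i.succ) = Pi.mulSingle j a := by
  funext i
  rcases eq_or_ne i j with rfl | h
  · rw [Pi.mulSingle_eq_same, Pi.mulSingle_eq_same]
  · rw [Pi.mulSingle_eq_of_ne (fun hc => h (Fin.succ_injective _ hc)),
      Pi.mulSingle_eq_of_ne h]

lemma zero_mulSingle_succ {k : ℕ} (N : Fin (k + 1) → Type u) [∀ i, Group (N i)]
    (j : Fin k) (a : N j.succ) :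
    Pi.mulSingle (Fin.succ j) a 0 = 1 :=
  Pi.mulSingle_eq_of_ne (Fin.succ_ne_zero j).symm a

lemma he0_aux {k : ℕ} (N : Fin (k + 1) → Type u) [∀ i, Group (N i)] (a : N 0) :
    piSuccMulEquiv N (Pi.mulSingle 0 a) = (a, 1) := by
  rw [piSuccMulEquiv_apply]
  have h1 : Pi.mulSingle (0 : Fin (k + 1)) a 0 = a := Pi.mulSingle_eq_same 0 a
  have h2 : (fun j : Fin k => Pi.mulSingle (0 : Fin (k + 1)) a j.succ)
      = (1 : ∀ j : Fin k, N j.succ) := by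
    funext j
    exact Pi.mulSingle_eq_of_ne (Fin.succ_ne_zero j) a
  rw [h1, h2]

lemma hes_aux {k : ℕ} (N : Fin (k + 1) → Type u) [∀ i, Group (N i)]
    (j : Fin k) (a : N j.succ) :
    piSuccMulEquiv N (Pi.mulSingle j.succ a) = (1, Pi.mulSingle j a) := by
  rw [piSuccMulEquiv_apply, zero_mulSingle_succ, tail_mulSingle]

theorem gaschuetz_pi_aux (k : ℕ) :
    ∀ (N : Fin k → Type u) [∀ i, Group (N i)] [∀ i, Finite (N i)],
    (∀ i, ((MonoidHom.mulSingle N i).range : Subgroup (∀ j, N j)).Characteristic) →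
    (∀ i, GaschuetzHolds (N i)) → GaschuetzHolds (∀ i, N i) := by
  induction k with
  | zero =>
    intro N _ _ _ _
    intro G _ _ f H hinj hnorm hle hcop hcomp
    have hr : f.range = ⊥ := by
      rw [Subgroup.eq_bot_iff_forall]
      rintro x ⟨y, rfl⟩
      rw [Subsingleton.elim y 1, map_one]
    refine ⟨⊤, le_top, by rw [hr]; simp, ?_⟩
    rw [hr]
    ext x
    simp [Set.mem_mul]
  | succ k ih =>
    intro N instG instF hchar hG
    set e := piSuccMulEquiv N with he
    -- transport of the head factor
    have hmapA : Subgroup.map e.toMonoidHom (MonoidHom.mulSingle N 0).range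
        = (MonoidHom.inl (N 0) (∀ j : Fin k, N j.succ)).range := by
      apply le_antisymm
      · rintro x hx
        obtain ⟨y, hy, rfl⟩ := Subgroup.mem_map.mp hx
        obtain ⟨a, rfl⟩ := hy
        exact ⟨a, (he0_aux N a).symm⟩
      · rintro x ⟨a, rfl⟩
        exact Subgroup.mem_map.mpr ⟨Pi.mulSingle 0 a, ⟨a, rfl⟩, he0_aux N a⟩
    have hA' : (MonoidHom.inl (N 0) (∀ j : Fin k, N j.succ)).range.Characteristic := by
      rw [← hmapA]
      exact char_map_equiv e (hchar 0)
    -- transport of the tail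
    set Bsup : Subgroup (∀ i, N i) := ⨆ j : Fin k, (MonoidHom.mulSingle N (Fin.succ j)).range
      with hBsupdef
    have hBsupChar : Bsup.Characteristic := by
      rw [Subgroup.characteristic_iff_le_comap]
      intro φ
      refine iSup_le fun j x hx => Subgroup.mem_comap.mpr ?_
      have h1 : φ x ∈ (MonoidHom.mulSingle N j.succ).range :=
        Subgroup.mem_comap.mp (Subgroup.characteristic_iff_le_comap.mp (hchar j.succ) φ hx)
      exact le_iSup (fun j : Fin k => (MonoidHom.mulSingle N (Fin.succ j)).range) j h1
    have hmapB : Subgroup.map e.toMonoidHom Bsup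
        = (MonoidHom.inr (N 0) (∀ j : Fin k, N j.succ)).range := by
      apply le_antisymm
      · rw [hBsupdef, Subgroup.map_iSup]
        refine iSup_le fun j x hx => ?_
        obtain ⟨y, hy, rfl⟩ := Subgroup.mem_map.mp hx
        obtain ⟨a, rfl⟩ := hy
        exact ⟨Pi.mulSingle j a, (hes_aux N j a).symm⟩
      · rintro x ⟨t, rfl⟩
        refine Subgroup.mem_map.mpr ⟨Fin.cons 1 t, ?_, ?_⟩
        · -- Fin.cons 1 t ∈ Bsup
          have hmem' : ∀ i : Fin (k + 1), Pi.mulSingle i (Fin.cons (1 : N 0) t i) ∈ Bsup := by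
            intro i
            induction i using Fin.cases with
            | zero =>
              rw [Fin.cons_zero, Pi.mulSingle_one]
              exact one_mem _
            | succ j =>
              rw [Fin.cons_succ]
              exact le_iSup (fun j : Fin k =>
                (MonoidHom.mulSingle N (Fin.succ j)).range) j ⟨t j, rfl⟩
          have hmem2 := Subgroup.noncommProd_mem Bsup
            (t := Finset.univ)
            (f := fun i : Fin (k + 1) => Pi.mulSingle i (Fin.cons (1 : N 0) t i))
            (fun i _ j _ hij => Pi.mulSingle_apply_commute (Fin.cons (1 : N 0) t) i j)
            (fun i _ => hmem' i)
          rwa [Finset.noncommProd_mulSingle] at hmem2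
        · show e (Fin.cons 1 t) = MonoidHom.inr (N 0) (∀ j : Fin k, N j.succ) t
          have : (Fin.cons (1 : N 0) t : ∀ i, N i) = e.symm (1, t) := rfl
          rw [this, MulEquiv.apply_symm_apply]
          rfl
    have hB' : (MonoidHom.inr (N 0) (∀ j : Fin k, N j.succ)).range.Characteristic := by
      rw [← hmapB]
      exact char_map_equiv e hBsupChar
    -- tail characteristic hypothesis
    have htailchar : ∀ j : Fin k,
        ((MonoidHom.mulSingle (fun j : Fin k => N j.succ) j).range).Characteristic := by
      intro j
      rw [Subgroup.characteristic_iff_le_comap]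
      rintro φ x ⟨a, rfl⟩
      rw [Subgroup.mem_comap]
      set ψ : (∀ i, N i) ≃* (∀ i, N i) :=
        (e.trans ((MulEquiv.refl (N 0)).prodCongr φ)).trans e.symm with hψdef
      have hmem : Pi.mulSingle j.succ a ∈ (MonoidHom.mulSingle N j.succ).range := ⟨a, rfl⟩
      have h2 := Subgroup.mem_comap.mp
        (Subgroup.characteristic_iff_le_comap.mp (hchar j.succ) ψ hmem)
      have hψval : ψ (Pi.mulSingle j.succ a) = Fin.cons 1 (φ (Pi.mulSingle j a)) := by
        have hstep : ψ (Pi.mulSingle j.succ a)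
            = e.symm ((MulEquiv.refl (N 0)).prodCongr φ (e (Pi.mulSingle j.succ a))) := rfl
        rw [hstep, hes_aux N j a]
        rfl
      simp only [MulEquiv.coe_toMonoidHom] at h2
      rw [hψval] at h2
      obtain ⟨b, hb⟩ := h2
      refine ⟨b, ?_⟩
      funext i
      have h3 := congrFun hb i.succ
      rw [Fin.cons_succ] at h3
      have h4 := congrFun (tail_mulSingle N j b) i
      exact h4.symm.trans h3
    -- conclude
    have htail : GaschuetzHolds (∀ j : Fin k, N j.succ) :=
      ih (fun j : Fin k => N j.succ) htailchar (fun j => hG j.succ)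
    exact gaschuetz_of_mulEquiv (piSuccMulEquiv N).symm
      (gaschuetz_prod (N 0) (∀ j : Fin k, N j.succ) hA' hB' (hG 0) htail)

/-- If `N = N₁ × ⋯ × N_k` where each direct factor `Nᵢ` is characteristic in `N`, and
Gaschütz' theorem holds for each `Nᵢ`, then Gaschütz' theorem holds for `N`. -/
theorem gaschuetzHolds_pi {k : ℕ} (N : Fin k → Type u)
    [∀ i, Group (N i)] [∀ i, Finite (N i)]
    (hchar : ∀ i, ((MonoidHom.mulSingle N i).range :
      Subgroup (∀ j, N j)).Characteristic)
    (hG : ∀ i, GaschuetzHolds (N i)) :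
    GaschuetzHolds (∀ i, N i) := by
  exact gaschuetz_pi_aux k N hchar hG
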